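/- arXiv:1311.2547 — 2 statements merged into one kernel-verified Lean document; each statement's English description precedes it below -/
import Mathlib

section
/- For vectors in ℝ^d with ‖r̂ − r‖₂ = ε ≤ ‖r‖₂/2, the cosine of the angle between r̂ and r satisfies ⟨r̂, r⟩/(‖r̂‖₂‖r‖₂) ≥ 1 − 2ε / min(‖r‖₂, ‖r‖₂²). -/
/-- If `‖r̂ − r‖ = ε ≤ ‖r‖/2`, then the cosine of the angle between `r̂` and `r` satisfies
`⟨r̂,r⟩/(‖r̂‖‖r‖) ≥ 1 − 2ε/min(‖r‖, ‖r‖²)`. -/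
theorem stmt_8 {d : ℕ} (r rhat : EuclideanSpace ℝ (Fin d)) (hr : r ≠ 0)
    (heps : ‖rhat - r‖ ≤ ‖r‖ / 2) :
    1 - 2 * ‖rhat - r‖ / min ‖r‖ (‖r‖ ^ 2)
      ≤ (inner ℝ rhat r : ℝ) / (‖rhat‖ * ‖r‖) := by
  set ε := ‖rhat - r‖ with hεdef
  have hR : 0 < ‖r‖ := norm_pos_iff.mpr hr
  have hε0 : 0 ≤ ε := norm_nonneg _
  have hCS : -(ε * ‖r‖) ≤ (inner ℝ (rhat - r) r : ℝ) := by
    have h1 := abs_real_inner_le_norm (rhat - r) r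
    have h2 := neg_abs_le (inner ℝ (rhat - r) r : ℝ)
    linarith
  have hsub : (inner ℝ (rhat - r) r : ℝ) = inner ℝ rhat r - inner ℝ r r :=
    inner_sub_left _ _ _
  have hrr : (inner ℝ r r : ℝ) = ‖r‖ ^ 2 := real_inner_self_eq_norm_sq r
  have hinner : ‖r‖ ^ 2 - ε * ‖r‖ ≤ (inner ℝ rhat r : ℝ) := by linarith
  have hinner0 : 0 ≤ (inner ℝ rhat r : ℝ) := by nlinarith
  have hnh : ‖rhat‖ ≤ ‖r‖ + ε := by
    have := norm_sub_norm_le rhat r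
    linarith
  have hnl : ‖r‖ - ε ≤ ‖rhat‖ := by
    have := norm_sub_norm_le r rhat
    rw [norm_sub_rev] at this
    linarith
  have hnpos : 0 < ‖rhat‖ := by linarith
  have hd : 0 < ‖rhat‖ * ‖r‖ := by positivity
  have step1 : (‖r‖ ^ 2 - ε * ‖r‖) / ((‖r‖ + ε) * ‖r‖)
      ≤ (inner ℝ rhat r : ℝ) / (‖rhat‖ * ‖r‖) := by
    apply div_le_div₀ hinner0 hinner hd
    nlinarith
  have hmin : 0 < min ‖r‖ (‖r‖ ^ 2) := lt_min hR (by positivity)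
  have hminle : min ‖r‖ (‖r‖ ^ 2) ≤ ‖r‖ + ε := by
    have := min_le_left ‖r‖ (‖r‖ ^ 2)
    linarith
  have step2 : 1 - 2 * ε / min ‖r‖ (‖r‖ ^ 2)
      ≤ (‖r‖ ^ 2 - ε * ‖r‖) / ((‖r‖ + ε) * ‖r‖) := by
    have heq : (‖r‖ ^ 2 - ε * ‖r‖) / ((‖r‖ + ε) * ‖r‖)
        = 1 - 2 * ε / (‖r‖ + ε) := by
      field_simp
      ring
    rw [heq]
    have : 2 * ε / (‖r‖ + ε) ≤ 2 * ε / min ‖r‖ (‖r‖ ^ 2) := by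
      gcongr
    linarith
  linarith
end

section
/- Davis–Kahan consequence: let Q, Q̂ be symmetric d×d matrices, let U (resp. Û) be the span of the eigenvectors of Q (resp. Q̂) corresponding to its k eigenvalues outside [λ₀ − Δ/2, λ₀ + Δ/2], where λ₀ has multiplicity d − k in Q and Δ = min_ℓ |λ_ℓ − λ₀| > 0 over the other eigenvalues. If ‖Q̂ − Q‖₂ ≤ Δε/(1+ε) for some 0 < ε ≤ 1/4, then the sine of the largest principal angle between U and Û is at most ε. -/
open Matrix RealInnerProductSpace

section DKAux

variable {d : ℕ}

private lemma dk_mem_span_onb_iff (b : OrthonormalBasis (Fin d) ℝ (EuclideanSpace ℝ (Fin d)))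
    (s : Set (Fin d)) (x : EuclideanSpace ℝ (Fin d)) :
    x ∈ Submodule.span ℝ (b '' s) ↔ ∀ i ∉ s, ⟪b i, x⟫ = 0 := by
  constructor
  · intro hx i hi
    induction hx using Submodule.span_induction with
    | mem y hy =>
      obtain ⟨j, hj, rfl⟩ := hy
      have : i ≠ j := fun h => hi (h ▸ hj)
      simpa using b.orthonormal.2 this
    | zero => simp
    | add y z _ _ hy hz => simp [inner_add_right, hy, hz]
    | smul c y _ hy => simp [inner_smul_right, hy]
  · intro h
    have hx : x = ∑ i, ⟪b i, x⟫ • b i := by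
      simpa [b.repr_apply_apply] using (b.sum_repr x).symm
    rw [hx]
    refine Submodule.sum_mem _ fun i _ => ?_
    by_cases hi : i ∈ s
    · exact Submodule.smul_mem _ _ (Submodule.subset_span ⟨i, hi, rfl⟩)
    · simp [h i hi]

private lemma dk_mem_span_orthogonal (b : OrthonormalBasis (Fin d) ℝ (EuclideanSpace ℝ (Fin d)))
    (s : Set (Fin d)) (x : EuclideanSpace ℝ (Fin d)) :
    x ∈ (Submodule.span ℝ (b '' s))ᗮ ↔ ∀ i ∈ s, ⟪b i, x⟫ = 0 := by
  rw [Submodule.mem_orthogonal]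
  constructor
  · intro h i hi
    exact h (b i) (Submodule.subset_span ⟨i, hi, rfl⟩)
  · intro h u hu
    induction hu using Submodule.span_induction with
    | mem y hy =>
      obtain ⟨j, hj, rfl⟩ := hy
      exact h j hj
    | zero => simp
    | add y z _ _ hy hz => simp [inner_add_left, hy, hz]
    | smul c y _ hy => simp [inner_smul_left, hy]

private lemma dk_norm_sq (b : OrthonormalBasis (Fin d) ℝ (EuclideanSpace ℝ (Fin d)))
    (x : EuclideanSpace ℝ (Fin d)) : ‖x‖ ^ 2 = ∑ i, ⟪b i, x⟫ ^ 2 := by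
  rw [← b.repr.norm_map x, EuclideanSpace.norm_eq, Real.sq_sqrt (by positivity)]
  simp [b.repr_apply_apply, sq_abs]

private lemma dk_apply_basis (M : Matrix (Fin d) (Fin d) ℝ) (hM : M.IsHermitian) (i : Fin d) :
    Matrix.toEuclideanCLM (𝕜 := ℝ) M (hM.eigenvectorBasis i)
      = hM.eigenvalues i • hM.eigenvectorBasis i := by
  apply (WithLp.equiv 2 _).injective
  simp [Matrix.ofLp_toEuclideanCLM, hM.mulVec_eigenvectorBasis i]

private lemma dk_symm (M : Matrix (Fin d) (Fin d) ℝ) (hM : M.IsHermitian)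
    (x y : EuclideanSpace ℝ (Fin d)) :
    ⟪Matrix.toEuclideanCLM (𝕜 := ℝ) M x, y⟫ = ⟪x, Matrix.toEuclideanCLM (𝕜 := ℝ) M y⟫ := by
  have h := (Matrix.isHermitian_iff_isSymmetric.mp hM)
  exact h x y

private lemma dk_inner_basis_apply (M : Matrix (Fin d) (Fin d) ℝ) (hM : M.IsHermitian) (i : Fin d)
    (z : EuclideanSpace ℝ (Fin d)) :
    ⟪hM.eigenvectorBasis i, Matrix.toEuclideanCLM (𝕜 := ℝ) M z⟫
      = hM.eigenvalues i * ⟪hM.eigenvectorBasis i, z⟫ := by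
  rw [← dk_symm M hM, dk_apply_basis M hM i, inner_smul_left]
  simp

private lemma dk_sup_eq_span (M : Matrix (Fin d) (Fin d) ℝ) (hM : M.IsHermitian) (p : ℝ → Prop) :
    (⨆ (μ : ℝ) (_ : p μ),
        Module.End.eigenspace (Matrix.toEuclideanLin M : Module.End ℝ (EuclideanSpace ℝ (Fin d))) μ)
      = Submodule.span ℝ (hM.eigenvectorBasis '' {i | p (hM.eigenvalues i)}) := by
  have hMapp : ∀ i, Matrix.toEuclideanLin M (hM.eigenvectorBasis i)
      = hM.eigenvalues i • hM.eigenvectorBasis i := by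
    intro i
    rw [← Matrix.coe_toEuclideanCLM_eq_toEuclideanLin]
    exact dk_apply_basis M hM i
  apply le_antisymm
  · refine iSup₂_le fun μ hμ => ?_
    intro x hx
    rw [Module.End.mem_eigenspace_iff] at hx
    rw [dk_mem_span_onb_iff]
    intro i hi
    have h1 : ⟪hM.eigenvectorBasis i, Matrix.toEuclideanLin M x⟫
        = hM.eigenvalues i * ⟪hM.eigenvectorBasis i, x⟫ := by
      rw [← (Matrix.isHermitian_iff_isSymmetric.mp hM) _ x, hMapp i, inner_smul_left]
      simp
    rw [hx, inner_smul_right] at h1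
    rcases eq_or_ne (hM.eigenvalues i) μ with h | h
    · exact absurd (show p (hM.eigenvalues i) from h ▸ hμ) hi
    · have := sub_eq_zero.mpr h1.symm
      rw [← sub_mul] at this
      rcases mul_eq_zero.mp this with h' | h'
      · exact absurd (sub_eq_zero.mp h') h
      · exact h'
  · rw [Submodule.span_le]
    rintro y ⟨i, hi, rfl⟩
    refine Submodule.mem_iSup_of_mem (hM.eigenvalues i) (Submodule.mem_iSup_of_mem hi ?_)
    rw [Module.End.mem_eigenspace_iff, hMapp i]

end DKAux

set_option maxHeartbeats 1000000 in
/-- Davis–Kahan consequence: let `Q, Q̂` be symmetric, `λ₀` an eigenvalue of `Q` of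
multiplicity `d − k` with all other eigenvalues at distance at least `Δ > 0` from `λ₀`, and
let `U` (resp. `Û`) be the span of the eigenvectors of `Q` (resp. `Q̂`) for eigenvalues
outside `[λ₀ − Δ/2, λ₀ + Δ/2]`. If `‖Q̂ − Q‖₂ ≤ Δ ε/(1+ε)` with `0 < ε ≤ 1/4`, then the sine
of the largest principal angle between `U` and `Û` is at most `ε`, i.e. every `x ∈ U`
satisfies `‖x − proj_Û x‖ ≤ ε ‖x‖`. -/
theorem stmt_17 {d k : ℕ} (Q Qhat : Matrix (Fin d) (Fin d) ℝ)
    (hQ : Q.IsHermitian) (hQhat : Qhat.IsHermitian)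
    (lam0 Δ ε : ℝ) (hΔ : 0 < Δ) (hε : 0 < ε) (hε4 : ε ≤ 1/4)
    (hmult : (Finset.univ.filter fun i => hQ.eigenvalues i = lam0).card = d - k)
    (hgap : ∀ i, hQ.eigenvalues i ≠ lam0 → Δ ≤ |hQ.eigenvalues i - lam0|)
    (hnorm : ‖Matrix.toEuclideanCLM (𝕜 := ℝ) (Qhat - Q)‖ ≤ Δ * ε / (1 + ε))
    (U Uhat : Submodule ℝ (EuclideanSpace ℝ (Fin d)))
    (hU : U = ⨆ (μ : ℝ) (_ : μ ∉ Set.Icc (lam0 - Δ/2) (lam0 + Δ/2)),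
      Module.End.eigenspace (Matrix.toEuclideanLin Q : Module.End ℝ (EuclideanSpace ℝ (Fin d))) μ)
    (hUhat : Uhat = ⨆ (μ : ℝ) (_ : μ ∉ Set.Icc (lam0 - Δ/2) (lam0 + Δ/2)),
      Module.End.eigenspace (Matrix.toEuclideanLin Qhat : Module.End ℝ (EuclideanSpace ℝ (Fin d))) μ) :
    ∀ x ∈ U, ‖x - (Submodule.orthogonalProjectionOnto Uhat x : EuclideanSpace ℝ (Fin d))‖ ≤ ε * ‖x‖ := by
  classical
  set η : ℝ := Δ * ε / (1 + ε) with hηdef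
  have hε1 : (0:ℝ) < 1 + ε := by linarith
  have hη0 : 0 ≤ η := by positivity
  have hηΔ2 : η < Δ / 2 := by
    rw [hηdef, div_lt_div_iff₀ hε1 two_pos]
    nlinarith
  have hηΔ : η < Δ := by linarith
  set A := Matrix.toEuclideanCLM (𝕜 := ℝ) Q with hA
  set Ah := Matrix.toEuclideanCLM (𝕜 := ℝ) Qhat with hAh
  set v := hQ.eigenvectorBasis with hv
  set lam := hQ.eigenvalues with hlam
  set vh := hQhat.eigenvectorBasis with hvh
  set lamh := hQhat.eigenvalues with hlamh
  set I : Set ℝ := Set.Icc (lam0 - Δ/2) (lam0 + Δ/2) with hI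
  -- perturbation bound on vectors
  have hE : ∀ z : EuclideanSpace ℝ (Fin d), ‖Ah z - A z‖ ≤ η * ‖z‖ := by
    intro z
    have h1 : Ah z - A z = Matrix.toEuclideanCLM (𝕜 := ℝ) (Qhat - Q) z := by
      rw [map_sub]; rfl
    rw [h1]
    calc ‖Matrix.toEuclideanCLM (𝕜 := ℝ) (Qhat - Q) z‖
        ≤ ‖Matrix.toEuclideanCLM (𝕜 := ℝ) (Qhat - Q)‖ * ‖z‖ :=
          ContinuousLinearMap.le_opNorm _ z
      _ ≤ η * ‖z‖ := by gcongr
  -- span descriptions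
  have hU' : U = Submodule.span ℝ (v '' {i | lam i ∉ I}) := by
    rw [hU, dk_sup_eq_span]
  have hUhat' : Uhat = Submodule.span ℝ (vh '' {i | lamh i ∉ I}) := by
    rw [hUhat, dk_sup_eq_span]
  -- membership criteria
  have hmemU : ∀ x : EuclideanSpace ℝ (Fin d), x ∈ U ↔ ∀ i, lam i ∈ I → ⟪v i, x⟫ = 0 := by
    intro x
    rw [hU', dk_mem_span_onb_iff]
    constructor
    · intro h i hi; exact h i (by simpa using hi)
    · intro h i hi; exact h i (by simpa using hi)
  -- Weyl-lite: eigenvalues of Qhat inside I are within η of lam0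
  have hweyl : ∀ i, lamh i ∈ I → |lamh i - lam0| ≤ η := by
    intro i hi
    by_contra hcon
    push_neg at hcon
    set t := lamh i with ht
    set m : ℝ := min |t - lam0| (Δ/2) with hm
    have hηm : η < m := lt_min hcon hηΔ2
    have hw1 : ‖(vh i : EuclideanSpace ℝ (Fin d))‖ = 1 := vh.orthonormal.1 i
    have hAw : ‖A (vh i) - t • (vh i)‖ ≤ η := by
      have h1 : Ah (vh i) = t • (vh i) := dk_apply_basis Qhat hQhat i
      have h2 : A (vh i) - t • vh i = -(Ah (vh i) - A (vh i)) := by rw [h1]; abel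
      rw [h2, norm_neg]
      simpa [hw1] using hE (vh i)
    have hlow : m ^ 2 ≤ ‖A (vh i) - t • (vh i)‖ ^ 2 := by
      rw [dk_norm_sq v]
      have hcoef : ∀ j, ⟪v j, A (vh i) - t • (vh i)⟫ = (lam j - t) * ⟪v j, vh i⟫ := by
        intro j
        rw [inner_sub_right, inner_smul_right, dk_inner_basis_apply Q hQ]
        ring
      calc m ^ 2 = m ^ 2 * ‖(vh i : EuclideanSpace ℝ (Fin d))‖ ^ 2 := by rw [hw1]; ring
        _ = ∑ j, m ^ 2 * ⟪v j, vh i⟫ ^ 2 := by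
            rw [dk_norm_sq v, Finset.mul_sum]
        _ ≤ ∑ j, ⟪v j, A (vh i) - t • (vh i)⟫ ^ 2 := by
            refine Finset.sum_le_sum fun j _ => ?_
            rw [hcoef j, mul_pow]
            have hmj : m ≤ |lam j - t| := by
              rcases eq_or_ne (lam j) lam0 with h | h
              · have habs : |lam j - t| = |t - lam0| := by rw [h, abs_sub_comm]
                rw [habs]; exact min_le_left _ _
              · have h1 := hgap j h
                have h2 : |t - lam0| ≤ Δ/2 := by
                  rw [abs_le]
                  rcases hi with ⟨hi1, hi2⟩
                  constructor <;> linarith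
                have : Δ/2 ≤ |lam j - t| := by
                  have := abs_sub_abs_le_abs_sub (lam j - lam0) (t - lam0)
                  have h3 : (lam j - lam0) - (t - lam0) = lam j - t := by ring
                  rw [h3] at this
                  linarith
                exact le_trans (min_le_right _ _) this
            have hm0 : 0 ≤ m := le_trans hη0 hηm.le
            have hsq : m ^ 2 ≤ (lam j - t) ^ 2 := by
              rw [← sq_abs (lam j - t)]
              exact pow_le_pow_left₀ hm0 hmj 2
            exact mul_le_mul_of_nonneg_right hsq (sq_nonneg _)
    have : m ^ 2 ≤ η ^ 2 := le_trans hlow (pow_le_pow_left₀ (norm_nonneg _) hAw 2)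
    have hmη : m ≤ η := by nlinarith [le_trans hη0 hηm.le]
    linarith
  -- properties of vectors in Uhat-perp
  have hperp : ∀ w : EuclideanSpace ℝ (Fin d), w ∈ Uhatᗮ →
      (Ah w - lam0 • w) ∈ Uhatᗮ ∧ ‖Ah w - lam0 • w‖ ≤ η * ‖w‖ := by
    intro w hw
    rw [hUhat', dk_mem_span_orthogonal] at hw
    have hcoef : ∀ i, ⟪vh i, Ah w - lam0 • w⟫ = (lamh i - lam0) * ⟪vh i, w⟫ := by
      intro i
      rw [inner_sub_right, inner_smul_right, dk_inner_basis_apply Qhat hQhat]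
      ring
    constructor
    · rw [hUhat', dk_mem_span_orthogonal]
      intro i hi
      rw [hcoef i, hw i hi]
      ring
    · have h1 : ‖Ah w - lam0 • w‖ ^ 2 ≤ (η * ‖w‖) ^ 2 := by
        rw [dk_norm_sq vh, mul_pow, dk_norm_sq vh w, Finset.mul_sum]
        refine Finset.sum_le_sum fun i _ => ?_
        rw [hcoef i, mul_pow]
        by_cases hi : lamh i ∈ I
        · have := hweyl i hi
          have h2 : (lamh i - lam0) ^ 2 ≤ η ^ 2 := by
            rw [← sq_abs (lamh i - lam0)]
            exact pow_le_pow_left₀ (abs_nonneg _) this 2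
          exact mul_le_mul_of_nonneg_right h2 (sq_nonneg _)
        · rw [hw i (by simpa using hi)]
          simp [mul_nonneg (sq_nonneg η) (sq_nonneg _)]
      nlinarith [norm_nonneg (Ah w - lam0 • w), mul_nonneg hη0 (norm_nonneg w)]
  -- preimage construction: for x ∈ U there is y ∈ U with (A - lam0) y = x, Δ ‖y‖ ≤ ‖x‖
  have hinv : ∀ x : EuclideanSpace ℝ (Fin d), x ∈ U → ∃ y : EuclideanSpace ℝ (Fin d), y ∈ U ∧ A y - lam0 • y = x ∧ Δ * ‖y‖ ≤ ‖x‖ := by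
    intro x hx
    have hxc : ∀ i, lam i ∈ I → ⟪v i, x⟫ = 0 := (hmemU x).mp hx
    set g : Fin d → ℝ := fun i => if lam i = lam0 then 0 else (lam i - lam0)⁻¹ with hg
    set y : EuclideanSpace ℝ (Fin d) := v.repr.symm ((WithLp.equiv 2 _).symm (fun i => g i * ⟪v i, x⟫)) with hy
    have hyc : ∀ i, ⟪v i, y⟫ = g i * ⟪v i, x⟫ := by
      intro i
      rw [← v.repr_apply_apply, hy, LinearIsometryEquiv.apply_symm_apply]
      rfl
    have hlam0I : lam0 ∈ I := by
      rw [hI]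
      exact Set.mem_Icc.mpr ⟨by linarith, by linarith⟩
    have hgne : ∀ i, lam i ≠ lam0 → |g i| ≤ Δ⁻¹ := by
      intro i hi
      rw [hg]
      simp only [hi, if_false]
      rw [abs_inv]
      exact inv_anti₀ hΔ (hgap i hi)
    refine ⟨y, ?_, ?_, ?_⟩
    · rw [hmemU]
      intro i hi
      have : lam i = lam0 := by
        by_contra hne
        have h1 := hgap i hne
        rw [hI, Set.mem_Icc] at hi
        have h2 : |lam i - lam0| ≤ Δ/2 := abs_le.mpr ⟨by linarith [hi.1], by linarith [hi.2]⟩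
        linarith
      rw [hyc i, hg]
      simp [this]
    · -- (A - lam0) y = x
      apply v.repr.injective
      apply PiLp.ext
      intro j
      have hrepr : ∀ z : EuclideanSpace ℝ (Fin d), v.repr z j = ⟪v j, z⟫ := fun z => v.repr_apply_apply z j
      rw [hrepr, hrepr]
      rw [inner_sub_right, inner_smul_right, dk_inner_basis_apply Q hQ, hyc j]
      rcases eq_or_ne (lam j) lam0 with h | h
      · have hj0 : ⟪v j, x⟫ = 0 := hxc j (h ▸ hlam0I)
        rw [hj0, hg]
        simp [h]
      · rw [hg]
        simp only [h, if_false]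
        field_simp [sub_ne_zero.mpr h]
        ring
    · -- norm bound
      have h1 : ‖y‖ ^ 2 ≤ (Δ⁻¹ * ‖x‖) ^ 2 := by
        rw [dk_norm_sq v, mul_pow, dk_norm_sq v x, Finset.mul_sum]
        refine Finset.sum_le_sum fun i _ => ?_
        rw [hyc i, mul_pow]
        rcases eq_or_ne (lam i) lam0 with h | h
        · rw [hg]; simp [h]
          positivity
        · have h2 : g i ^ 2 ≤ (Δ⁻¹) ^ 2 := by
            rw [← sq_abs (g i)]
            exact pow_le_pow_left₀ (abs_nonneg _) (hgne i h) 2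
          exact mul_le_mul_of_nonneg_right h2 (sq_nonneg _)
      have h2 : ‖y‖ ≤ Δ⁻¹ * ‖x‖ := by
        nlinarith [norm_nonneg y, mul_nonneg (inv_nonneg.mpr hΔ.le) (norm_nonneg x)]
      have h3 := mul_le_mul_of_nonneg_left h2 hΔ.le
      rwa [← mul_assoc, mul_inv_cancel₀ hΔ.ne', one_mul] at h3
  -- operator norm of the restricted difference map
  set f : ↥U →L[ℝ] EuclideanSpace ℝ (Fin d) :=
    (ContinuousLinearMap.id ℝ (EuclideanSpace ℝ (Fin d))
      - Uhat.subtypeL.comp (Submodule.orthogonalProjectionOnto Uhat)).comp U.subtypeL with hf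
  set s : ℝ := ‖f‖ with hs
  have hs0 : 0 ≤ s := norm_nonneg f
  have hfapp : ∀ (x : EuclideanSpace ℝ (Fin d)) (hx : x ∈ U),
      f ⟨x, hx⟩ = x - (Submodule.orthogonalProjectionOnto Uhat x : EuclideanSpace ℝ (Fin d)) := by
    intro x hx
    simp [hf, ContinuousLinearMap.sub_apply]
  have hfle : ∀ (x : EuclideanSpace ℝ (Fin d)) (hx : x ∈ U),
      ‖x - (Submodule.orthogonalProjectionOnto Uhat x : EuclideanSpace ℝ (Fin d))‖ ≤ s * ‖x‖ := by
    intro x hx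
    have h1 := f.le_opNorm ⟨x, hx⟩
    rw [hfapp x hx] at h1
    simpa using h1
  have hC0 : 0 ≤ η * (s + 1) / Δ := by positivity
  -- key estimate
  have hkey : ∀ (x : EuclideanSpace ℝ (Fin d)) (hx : x ∈ U),
      ‖x - (Submodule.orthogonalProjectionOnto Uhat x : EuclideanSpace ℝ (Fin d))‖
        ≤ (η * (s + 1) / Δ) * ‖x‖ := by
    intro x hx
    set w : EuclideanSpace ℝ (Fin d) := x - (Submodule.orthogonalProjectionOnto Uhat x : EuclideanSpace ℝ (Fin d)) with hwdef
    have hw : w ∈ Uhatᗮ := Submodule.sub_starProjection_mem_orthogonal (K := Uhat) x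
    obtain ⟨y, hyU, hyx, hyn⟩ := hinv x hx
    obtain ⟨hz1, hz2⟩ := hperp w hw
    have horth := (Submodule.mem_orthogonal Uhat w).mp hw
    have hyz := (Submodule.mem_orthogonal Uhat _).mp hz1
      (Submodule.orthogonalProjectionOnto Uhat y : EuclideanSpace ℝ (Fin d)) (Submodule.orthogonalProjectionOnto Uhat y).2
    -- ‖w‖² = ⟪x, w⟫
    have h1 : ‖w‖ ^ 2 = ⟪x, w⟫ := by
      have hx2 : x = w + (Submodule.orthogonalProjectionOnto Uhat x : EuclideanSpace ℝ (Fin d)) := by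
        rw [hwdef]; abel
      rw [hx2, inner_add_left, horth _ (Submodule.orthogonalProjectionOnto Uhat x).2,
        real_inner_self_eq_norm_sq]
      ring
    -- ⟪x, w⟫ = ⟪y - P y, Ah w - lam0 w⟫ - ⟪y, Ah w - A w⟫
    have h2 : ⟪x, w⟫ = ⟪y - (Submodule.orthogonalProjectionOnto Uhat y : EuclideanSpace ℝ (Fin d)),
          Ah w - lam0 • w⟫ - ⟪y, Ah w - A w⟫ := by
      have e1 : ⟪A y, w⟫ = ⟪y, A w⟫ := dk_symm Q hQ y w
      simp only [inner_sub_left, inner_sub_right, real_inner_smul_left,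
        real_inner_smul_right] at hyz ⊢
      rw [← hyx]
      simp only [inner_sub_left, real_inner_smul_left]
      linear_combination e1 + hyz
    have h3 : |⟪x, w⟫| ≤ s * ‖y‖ * (η * ‖w‖) + ‖y‖ * (η * ‖w‖) := by
      rw [h2]
      refine le_trans (abs_sub _ _) ?_
      gcongr
      · exact le_trans (abs_real_inner_le_norm _ _)
          (mul_le_mul (hfle y hyU) hz2 (norm_nonneg _) (by positivity))
      · exact le_trans (abs_real_inner_le_norm _ _)
          (mul_le_mul_of_nonneg_left (hE w) (norm_nonneg _))
    have habs : ‖w‖ ^ 2 ≤ s * ‖y‖ * (η * ‖w‖) + ‖y‖ * (η * ‖w‖) := by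
      rw [h1]; exact le_trans (le_abs_self _) h3
    have hyb : ‖y‖ ≤ ‖x‖ / Δ := by
      rw [le_div_iff₀ hΔ]; linarith
    have h4 : ‖w‖ ^ 2 ≤ (η * (s + 1) / Δ) * ‖x‖ * ‖w‖ := by
      calc ‖w‖ ^ 2 ≤ s * ‖y‖ * (η * ‖w‖) + ‖y‖ * (η * ‖w‖) := habs
        _ = (s + 1) * η * ‖w‖ * ‖y‖ := by ring
        _ ≤ (s + 1) * η * ‖w‖ * (‖x‖ / Δ) := by
            refine mul_le_mul_of_nonneg_left hyb (by positivity)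
        _ = (η * (s + 1) / Δ) * ‖x‖ * ‖w‖ := by ring
    rcases eq_or_lt_of_le (norm_nonneg w) with h0 | h0
    · rw [← h0]
      positivity
    · nlinarith [h4, h0]
  -- bootstrap
  have hsb : s ≤ η * (s + 1) / Δ := by
    refine f.opNorm_le_bound hC0 fun u => ?_
    have := hkey u u.2
    rw [← hfapp u u.2] at this
    simpa using this
  have heq : η * (1 + ε) = Δ * ε := by
    rw [hηdef]
    field_simp
  have hsε : s ≤ ε := by
    rw [le_div_iff₀ hΔ] at hsb
    have h4 : s * (Δ - η) ≤ ε * (Δ - η) := by nlinarith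
    exact le_of_mul_le_mul_right h4 (by linarith)
  intro x hx
  calc ‖x - (Submodule.orthogonalProjectionOnto Uhat x : EuclideanSpace ℝ (Fin d))‖ ≤ s * ‖x‖ := hfle x hx
    _ ≤ ε * ‖x‖ := mul_le_mul_of_nonneg_right hsε (norm_nonneg x)
end
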